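/- Let Q : ℝ → ℝ be an even polynomial of degree 2n ≥ 4 such that Q(0) = 0, Q(r) > 0 for all r ≠ 0, and the coefficient of r² in Q equals 1. Let m, ℓ ∈ ℕ. Then there exists a constant C > 0, depending only on Q, m and ℓ, such that for every ε ∈ (0,1], every x₀ > 0 and every x₁ ∈ ℝ, one has |∫_ℝ (2πik)^ℓ (ε⁻² Q(2πεk))^m exp(−ε⁻² Q(2πεk) x₀) e^{2πik x₁} dk| ≤ C x₀^{−m−(ℓ+1)/2}. -/

import Mathlib

set_option maxHeartbeats 1000000
open MeasureTheory Real Polynomial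


private lemma quad_lower (Q : Polynomial ℝ)
    (heven : ∀ r : ℝ, Q.eval (-r) = Q.eval r)
    (hzero : Q.eval 0 = 0) (hpos : ∀ r : ℝ, r ≠ 0 → 0 < Q.eval r)
    (hcoeff : Q.coeff 2 = 1) :
    ∃ c : ℝ, 0 < c ∧ ∀ r : ℝ, c * r ^ 2 ≤ Q.eval r := by
  -- coeff 1 = 0 via derivative
  have hc1 : Q.coeff 1 = 0 := by
    have hQd : HasDerivAt (fun r : ℝ => Q.eval r) (Q.derivative.eval 0) 0 := Q.hasDerivAt 0
    have hneg : HasDerivAt (fun r : ℝ => Q.eval (-r)) (-(Q.derivative.eval 0)) 0 := by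
      have h := (Q.hasDerivAt (-(0:ℝ))).comp (0:ℝ) (hasDerivAt_neg (0:ℝ))
      rw [neg_zero, mul_neg_one] at h; exact h
    have heq : (fun r : ℝ => Q.eval (-r)) = fun r : ℝ => Q.eval r := funext heven
    rw [heq] at hneg
    have h0 : -(Q.derivative.eval 0) = Q.derivative.eval 0 := hneg.unique hQd
    have h1 : Q.derivative.eval 0 = 0 := by linarith
    have h2 : Q.derivative.eval 0 = Q.coeff 1 := by
      rw [← Polynomial.coeff_zero_eq_eval_zero, Polynomial.coeff_derivative]
      simp
    rw [h2] at h1; exact h1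
  have hc0 : Q.coeff 0 = 0 := by rw [Polynomial.coeff_zero_eq_eval_zero]; exact hzero
  set P : Polynomial ℝ := Q.divX.divX with hP
  have hfac : ∀ r : ℝ, Q.eval r = r ^ 2 * P.eval r := by
    intro r
    have e1 : Q.divX * X + C (Q.coeff 0) = Q := Polynomial.divX_mul_X_add Q
    have e2 : P * X + C (Q.divX.coeff 0) = Q.divX := Polynomial.divX_mul_X_add Q.divX
    have e3 : Q.divX.coeff 0 = Q.coeff 1 := Polynomial.coeff_divX
    rw [hc0, map_zero, add_zero] at e1
    rw [e3, hc1, map_zero, add_zero] at e2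
    rw [← e1, ← e2]
    simp [Polynomial.eval_mul]
    ring
  have hP0 : P.eval 0 = 1 := by
    rw [← Polynomial.coeff_zero_eq_eval_zero]
    have : P.coeff 0 = Q.coeff 2 := by
      rw [hP, Polynomial.coeff_divX, Polynomial.coeff_divX]
    rw [this, hcoeff]
  have hPpos : ∀ r : ℝ, 0 < P.eval r := by
    intro r
    rcases eq_or_ne r 0 with h | h
    · rw [h, hP0]; norm_num
    · have := hpos r h
      rw [hfac r] at this
      nlinarith [sq_nonneg r, pow_pos (abs_pos.mpr h) 2]
  have hPeven : ∀ r : ℝ, P.eval (-r) = P.eval r := by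
    intro r
    rcases eq_or_ne r 0 with h | h
    · rw [h, neg_zero]
    · have h1 := heven r
      rw [hfac r, hfac (-r)] at h1
      have : (-r) ^ 2 = r ^ 2 := by ring
      rw [this] at h1
      exact mul_left_cancel₀ (pow_ne_zero 2 h) h1
  -- P tends to atTop at atTop (or is constant)
  by_cases hdeg : 0 < P.degree
  · have hlc : 0 ≤ P.leadingCoeff := by
      by_contra hlc
      push_neg at hlc
      have ht := P.tendsto_atBot_of_leadingCoeff_nonpos hdeg hlc.le
      obtain ⟨r, hr⟩ := (ht.eventually (Filter.eventually_lt_atBot (0:ℝ))).exists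
      exact absurd (hPpos r) (not_lt.mpr hr.le)
    have ht := P.tendsto_atTop_of_leadingCoeff_nonneg hdeg hlc
    obtain ⟨R, hR⟩ := (ht.eventually (Filter.eventually_ge_atTop (1:ℝ))).exists_forall_of_atTop
    -- min on [-(|R|+1), |R|+1]
    set R' : ℝ := |R| + 1 with hR'
    have hR'pos : 0 < R' := by positivity
    have hcomp : IsCompact (Set.Icc (-R') R') := isCompact_Icc
    obtain ⟨r₀, hr₀mem, hr₀⟩ := hcomp.exists_isMinOn (Set.nonempty_Icc.mpr (by linarith))
      (P.continuous_aeval.continuousOn)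
    refine ⟨min (P.eval r₀) 1, lt_min (hPpos r₀) one_pos, fun r => ?_⟩
    have hle : min (P.eval r₀) 1 ≤ P.eval r := by
      rcases le_or_gt (|r|) R' with h | h
      · have hrmem : r ∈ Set.Icc (-R') R' := abs_le.mp h
        exact le_trans (min_le_left _ _) (hr₀ hrmem)
      · refine le_trans (min_le_right _ _) ?_
        have hRR' : R ≤ R' := by
          rw [hR']
          have := le_abs_self R
          linarith
        rcases le_or_gt 0 r with hr | hr
        · exact hR r (by rw [abs_of_nonneg hr] at h; linarith)
        · rw [← hPeven r]
          exact hR (-r) (by rw [abs_of_neg hr] at h; linarith)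
    rw [hfac r]
    nlinarith [sq_nonneg r]
  · have hPC : P = C (P.coeff 0) := Polynomial.eq_C_of_degree_le_zero (not_lt.mp hdeg)
    refine ⟨1, one_pos, fun r => ?_⟩
    have h01 : P.coeff 0 = 1 := by
      have := hP0
      rwa [← Polynomial.coeff_zero_eq_eval_zero] at this
    have : P.eval r = 1 := by
      conv_lhs => rw [hPC]
      rw [h01]; simp
    rw [hfac r, this]
    nlinarith [sq_nonneg r]


lemma pow_le_factorial_mul_exp {t : ℝ} (ht : 0 ≤ t) (j : ℕ) :
    t ^ j ≤ j.factorial * Real.exp t := by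
  have h1 : t ^ j / j.factorial ≤ Real.exp t := by
    calc t ^ j / j.factorial
        ≤ ∑ i ∈ Finset.range (j + 1), t ^ i / i.factorial := by
          refine Finset.single_le_sum (f := fun i => t ^ i / i.factorial) (fun i _ => by positivity)
            (Finset.self_mem_range_succ j)
      _ ≤ Real.exp t := Real.sum_le_exp_of_nonneg ht _
  have hf : (0:ℝ) < j.factorial := by positivity
  rw [div_le_iff₀ hf] at h1
  linarith

lemma pow_mul_exp_neg_le {t : ℝ} (ht : 0 ≤ t) (j : ℕ) :
    t ^ j * Real.exp (-t) ≤ j.factorial := by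
  have h := pow_le_factorial_mul_exp ht j
  have he : (0:ℝ) < Real.exp (-t) := Real.exp_pos _
  calc t ^ j * Real.exp (-t) ≤ (j.factorial * Real.exp t) * Real.exp (-t) := by
        exact mul_le_mul_of_nonneg_right h he.le
    _ = j.factorial := by rw [mul_assoc, ← Real.exp_add]; simp

lemma integrable_abs_pow_mul_exp (ℓ : ℕ) {a : ℝ} (ha : 0 < a) :
    Integrable (fun k : ℝ => |k| ^ ℓ * Real.exp (-a * k ^ 2)) := by
  have ha2 : 0 < a / 2 := by linarith
  set D : ℝ := 1 + (2 / a) ^ ℓ * ℓ.factorial with hD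
  refine Integrable.mono' ((integrable_exp_neg_mul_sq ha2).const_mul D) ?_ ?_
  · exact (Continuous.mul (continuous_abs.pow ℓ)
      ((continuous_const.mul (continuous_pow 2)).rexp : Continuous fun k : ℝ => Real.exp (-a * k ^ 2))).aestronglyMeasurable
  · refine Filter.Eventually.of_forall fun k => ?_
    have hnn : (0:ℝ) ≤ |k| ^ ℓ * Real.exp (-a * k ^ 2) := by positivity
    rw [Real.norm_of_nonneg hnn]
    have hsplit : |k| ^ ℓ ≤ 1 + (k ^ 2) ^ ℓ := by
      rcases le_or_gt (|k|) 1 with h | h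
      · have h1 : |k| ^ ℓ ≤ 1 := pow_le_one₀ (abs_nonneg k) h
        have h2 : (0:ℝ) ≤ (k ^ 2) ^ ℓ := by positivity
        linarith
      · have h2 : |k| ^ ℓ ≤ (|k| ^ 2) ^ ℓ := by
          rw [← pow_mul]
          exact pow_le_pow_right₀ h.le (by omega)
        rw [sq_abs] at h2
        have : (0:ℝ) ≤ (k ^ 2) ^ ℓ := by positivity
        linarith
    have hkey : (k ^ 2) ^ ℓ * Real.exp (-a * k ^ 2)
        ≤ (2 / a) ^ ℓ * ℓ.factorial * Real.exp (-(a / 2) * k ^ 2) := by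
      have ht : (0:ℝ) ≤ a / 2 * k ^ 2 := by positivity
      have h := pow_mul_exp_neg_le ht ℓ
      have hexp : Real.exp (-a * k ^ 2)
          = Real.exp (-(a / 2 * k ^ 2)) * Real.exp (-(a / 2) * k ^ 2) := by
        rw [← Real.exp_add]; congr 1; ring
      have hk2 : (k ^ 2) ^ ℓ = (2 / a) ^ ℓ * (a / 2 * k ^ 2) ^ ℓ := by
        rw [← mul_pow]
        congr 1
        field_simp
      rw [hexp, hk2]
      have := mul_le_mul_of_nonneg_right
        (by calc (a / 2 * k ^ 2) ^ ℓ * Real.exp (-(a / 2 * k ^ 2)) ≤ ℓ.factorial := h)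
        (Real.exp_pos (-(a / 2) * k ^ 2)).le
      calc (2 / a) ^ ℓ * (a / 2 * k ^ 2) ^ ℓ * (Real.exp (-(a / 2 * k ^ 2)) * Real.exp (-(a / 2) * k ^ 2))
          = (2 / a) ^ ℓ * (((a / 2 * k ^ 2) ^ ℓ * Real.exp (-(a / 2 * k ^ 2))) * Real.exp (-(a / 2) * k ^ 2)) := by ring
        _ ≤ (2 / a) ^ ℓ * (ℓ.factorial * Real.exp (-(a / 2) * k ^ 2)) := by
            refine mul_le_mul_of_nonneg_left ?_ (by positivity)
            exact mul_le_mul_of_nonneg_right h (Real.exp_pos _).le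
        _ = (2 / a) ^ ℓ * ℓ.factorial * Real.exp (-(a / 2) * k ^ 2) := by ring
    have hmono : Real.exp (-a * k ^ 2) ≤ Real.exp (-(a / 2) * k ^ 2) := by
      apply Real.exp_le_exp.mpr
      nlinarith [sq_nonneg k]
    calc |k| ^ ℓ * Real.exp (-a * k ^ 2)
        ≤ (1 + (k ^ 2) ^ ℓ) * Real.exp (-a * k ^ 2) := by
          exact mul_le_mul_of_nonneg_right hsplit (Real.exp_pos _).le
      _ = Real.exp (-a * k ^ 2) + (k ^ 2) ^ ℓ * Real.exp (-a * k ^ 2) := by ring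
      _ ≤ Real.exp (-(a / 2) * k ^ 2) + (2 / a) ^ ℓ * ℓ.factorial * Real.exp (-(a / 2) * k ^ 2) :=
          add_le_add hmono hkey
      _ = D * Real.exp (-(a / 2) * k ^ 2) := by rw [hD]; ring

lemma integral_abs_pow_mul_exp_scale (ℓ : ℕ) {a : ℝ} (ha : 0 < a) :
    ∫ k : ℝ, |k| ^ ℓ * Real.exp (-a * k ^ 2)
      = ((Real.sqrt a)⁻¹) ^ (ℓ + 1) * ∫ u : ℝ, |u| ^ ℓ * Real.exp (-1 * u ^ 2) := by
  set b := Real.sqrt a with hb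
  have hbpos : 0 < b := Real.sqrt_pos.mpr ha
  have hb2 : b ^ 2 = a := Real.sq_sqrt ha.le
  have key : ∀ k : ℝ, (fun u : ℝ => |u| ^ ℓ * Real.exp (-1 * u ^ 2)) (b * k)
      = b ^ ℓ * (|k| ^ ℓ * Real.exp (-a * k ^ 2)) := by
    intro k
    simp only
    rw [abs_mul, abs_of_pos hbpos, mul_pow]
    have : -1 * (b * k) ^ 2 = -a * k ^ 2 := by rw [mul_pow, hb2]; ring
    rw [this]; ring
  have h1 : (∫ k : ℝ, (fun u : ℝ => |u| ^ ℓ * Real.exp (-1 * u ^ 2)) (b * k))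
      = |b⁻¹| • ∫ u : ℝ, |u| ^ ℓ * Real.exp (-1 * u ^ 2) := by
    exact MeasureTheory.Measure.integral_comp_mul_left
      (fun u : ℝ => |u| ^ ℓ * Real.exp (-1 * u ^ 2)) b
  have h2 : (∫ k : ℝ, (fun u : ℝ => |u| ^ ℓ * Real.exp (-1 * u ^ 2)) (b * k))
      = b ^ ℓ * ∫ k : ℝ, |k| ^ ℓ * Real.exp (-a * k ^ 2) := by
    simp_rw [key]
    exact MeasureTheory.integral_const_mul _ _
  rw [h2] at h1
  have hbinv : |b⁻¹| = b⁻¹ := abs_of_pos (by positivity)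
  rw [hbinv, smul_eq_mul] at h1
  have hbl : (b:ℝ) ^ ℓ ≠ 0 := by positivity
  have h3 : (∫ k : ℝ, |k| ^ ℓ * Real.exp (-a * k ^ 2))
      = (b⁻¹ * ∫ u : ℝ, |u| ^ ℓ * Real.exp (-1 * u ^ 2)) / b ^ ℓ :=
    eq_div_of_mul_eq hbl (by linarith [h1, mul_comm (b ^ ℓ) (∫ k : ℝ, |k| ^ ℓ * Real.exp (-a * k ^ 2))])
  rw [h3, inv_pow]
  field_simp [pow_succ]
  ring

theorem stmt1 (Q : Polynomial ℝ) (n : ℕ) (hn : 2 ≤ n) (hdeg : Q.natDegree = 2 * n)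
    (heven : ∀ r : ℝ, Q.eval (-r) = Q.eval r)
    (hzero : Q.eval 0 = 0) (hpos : ∀ r : ℝ, r ≠ 0 → 0 < Q.eval r)
    (hcoeff : Q.coeff 2 = 1) (m ℓ : ℕ) :
    ∃ C : ℝ, 0 < C ∧ ∀ ε : ℝ, ε ∈ Set.Ioc (0:ℝ) 1 → ∀ x₀ : ℝ, 0 < x₀ → ∀ x₁ : ℝ,
      ‖∫ k : ℝ, (2 * (π : ℂ) * Complex.I * (k : ℂ)) ^ ℓ
          * (((ε ^ 2)⁻¹ * Q.eval (2 * π * ε * k) : ℝ) : ℂ) ^ m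
          * Complex.exp ((-((ε ^ 2)⁻¹ * Q.eval (2 * π * ε * k) * x₀) : ℝ) : ℂ)
          * Complex.exp (2 * (π : ℂ) * Complex.I * (k : ℂ) * (x₁ : ℂ))‖
        ≤ C * x₀ ^ (-((m : ℝ) + ((ℓ : ℝ) + 1) / 2)) := by
  obtain ⟨c, hc, hQc⟩ := quad_lower Q heven hzero hpos hcoeff
  set I : ℝ := ∫ u : ℝ, |u| ^ ℓ * Real.exp (-1 * u ^ 2) with hI
  have hI0 : 0 ≤ I := integral_nonneg fun u => by positivity
  set S : ℝ := ((Real.sqrt (2 * π ^ 2 * c))⁻¹) ^ (ℓ + 1) with hS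
  have hS0 : 0 ≤ S := by positivity
  set K : ℝ := (2 * π) ^ ℓ * ((m.factorial : ℝ) * 2 ^ m) * S * I with hK
  have hK0 : 0 ≤ K :=
    mul_nonneg (mul_nonneg (mul_nonneg (by positivity) (by positivity)) hS0) hI0
  refine ⟨K + 1, by linarith, ?_⟩
  intro ε hε x₀ hx₀ x₁
  have hε0 : 0 < ε := hε.1
  have hε2 : (0:ℝ) < ε ^ 2 := by positivity
  set a : ℝ := 2 * π ^ 2 * c * x₀ with ha_def
  have ha : 0 < a := by
    have hπ := Real.pi_pos
    positivity
  set F : ℝ → ℝ := fun k => (ε ^ 2)⁻¹ * Q.eval (2 * π * ε * k) with hFdef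
  have hFk : ∀ k : ℝ, 4 * π ^ 2 * c * k ^ 2 ≤ F k := by
    intro k
    have h := hQc (2 * π * ε * k)
    have h2 : (ε ^ 2)⁻¹ * (c * (2 * π * ε * k) ^ 2) = 4 * π ^ 2 * c * k ^ 2 := by
      field_simp
      ring
    calc 4 * π ^ 2 * c * k ^ 2 = (ε ^ 2)⁻¹ * (c * (2 * π * ε * k) ^ 2) := h2.symm
      _ ≤ F k := mul_le_mul_of_nonneg_left h (by positivity)
  have hF0 : ∀ k : ℝ, 0 ≤ F k := by
    intro k
    refine le_trans ?_ (hFk k)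
    positivity
  set D : ℝ := (2 * π) ^ ℓ * ((m.factorial : ℝ) * 2 ^ m * x₀ ^ (-(m:ℝ))) with hD
  -- pointwise bound on the norm of the integrand
  have hnorm : ∀ k : ℝ,
      ‖(2 * (π : ℂ) * Complex.I * (k : ℂ)) ^ ℓ
          * (((ε ^ 2)⁻¹ * Q.eval (2 * π * ε * k) : ℝ) : ℂ) ^ m
          * Complex.exp ((-((ε ^ 2)⁻¹ * Q.eval (2 * π * ε * k) * x₀) : ℝ) : ℂ)
          * Complex.exp (2 * (π : ℂ) * Complex.I * (k : ℂ) * (x₁ : ℂ))‖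
        = (2 * π * |k|) ^ ℓ * F k ^ m * Real.exp (-(F k * x₀)) := by
    intro k
    rw [norm_mul, norm_mul, norm_mul, norm_pow, norm_pow]
    have e1 : ‖2 * (π : ℂ) * Complex.I * (k : ℂ)‖ = 2 * π * |k| := by
      simp [abs_of_pos Real.pi_pos]
    have e2 : ‖(((ε ^ 2)⁻¹ * Q.eval (2 * π * ε * k) : ℝ) : ℂ)‖ = F k := by
      rw [Complex.norm_real]
      exact abs_of_nonneg (hF0 k)
    have e3 : ‖Complex.exp ((-((ε ^ 2)⁻¹ * Q.eval (2 * π * ε * k) * x₀) : ℝ) : ℂ)‖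
        = Real.exp (-(F k * x₀)) := by
      rw [Complex.norm_exp, Complex.ofReal_re]
    have e4 : ‖Complex.exp (2 * (π : ℂ) * Complex.I * (k : ℂ) * (x₁ : ℂ))‖ = 1 := by
      rw [Complex.norm_exp]
      have : (2 * (π : ℂ) * Complex.I * (k : ℂ) * (x₁ : ℂ)).re = 0 := by
        simp [Complex.mul_re, Complex.mul_im]
      rw [this, Real.exp_zero]
    rw [e1, e2, e3, e4, mul_one]
  have hb : ∀ k : ℝ, (2 * π * |k|) ^ ℓ * F k ^ m * Real.exp (-(F k * x₀))
      ≤ D * (|k| ^ ℓ * Real.exp (-a * k ^ 2)) := by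
    intro k
    have ht : (0:ℝ) ≤ F k * x₀ / 2 := by
      have := hF0 k
      positivity
    have h1 : F k ^ m * Real.exp (-(F k * x₀ / 2)) ≤ (m.factorial : ℝ) * (2 / x₀) ^ m := by
      have h := pow_mul_exp_neg_le ht m
      have hFeq : F k ^ m = (2 / x₀) ^ m * (F k * x₀ / 2) ^ m := by
        rw [← mul_pow]
        congr 1
        field_simp
      calc F k ^ m * Real.exp (-(F k * x₀ / 2))
          = (2 / x₀) ^ m * ((F k * x₀ / 2) ^ m * Real.exp (-(F k * x₀ / 2))) := by
            rw [hFeq]; ring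
        _ ≤ (2 / x₀) ^ m * (m.factorial : ℝ) := by
            refine mul_le_mul_of_nonneg_left h (by positivity)
        _ = (m.factorial : ℝ) * (2 / x₀) ^ m := by ring
    have h2 : Real.exp (-(F k * x₀ / 2)) ≤ Real.exp (-a * k ^ 2) := by
      apply Real.exp_le_exp.mpr
      have := hFk k
      rw [ha_def]
      nlinarith [hx₀.le]
    have h3 : (2 / x₀ : ℝ) ^ m = 2 ^ m * x₀ ^ (-(m:ℝ)) := by
      rw [Real.rpow_neg hx₀.le, Real.rpow_natCast, div_pow]
      ring
    have hsplit : Real.exp (-(F k * x₀)) =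
        Real.exp (-(F k * x₀ / 2)) * Real.exp (-(F k * x₀ / 2)) := by
      rw [← Real.exp_add]; congr 1; ring
    calc (2 * π * |k|) ^ ℓ * F k ^ m * Real.exp (-(F k * x₀))
        = (2 * π) ^ ℓ * |k| ^ ℓ * ((F k ^ m * Real.exp (-(F k * x₀ / 2)))
            * Real.exp (-(F k * x₀ / 2))) := by
          rw [hsplit, mul_pow]; ring
      _ ≤ (2 * π) ^ ℓ * |k| ^ ℓ * (((m.factorial : ℝ) * (2 / x₀) ^ m)
            * Real.exp (-a * k ^ 2)) := by
          refine mul_le_mul_of_nonneg_left ?_ (by positivity)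
          exact mul_le_mul h1 h2 (Real.exp_pos _).le (by positivity)
      _ = D * (|k| ^ ℓ * Real.exp (-a * k ^ 2)) := by
          rw [hD, h3]; ring
  have hInt : Integrable (fun k : ℝ => D * (|k| ^ ℓ * Real.exp (-a * k ^ 2))) :=
    (integrable_abs_pow_mul_exp ℓ ha).const_mul D
  have hx1 : ((Real.sqrt x₀)⁻¹) ^ (ℓ + 1) = x₀ ^ (-(((ℓ:ℝ) + 1) / 2)) := by
    rw [Real.sqrt_eq_rpow, ← Real.rpow_neg hx₀.le,
      ← Real.rpow_natCast (x₀ ^ (-(1/2 : ℝ))) (ℓ + 1), ← Real.rpow_mul hx₀.le]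
    congr 1
    push_cast
    ring
  have hsqa : ((Real.sqrt a)⁻¹) ^ (ℓ + 1) = S * x₀ ^ (-(((ℓ:ℝ) + 1) / 2)) := by
    rw [ha_def, Real.sqrt_mul (by positivity) x₀, mul_inv, mul_pow, hS, hx1]
  have hx2 : x₀ ^ (-(m:ℝ)) * x₀ ^ (-(((ℓ:ℝ) + 1) / 2))
      = x₀ ^ (-((m : ℝ) + ((ℓ : ℝ) + 1) / 2)) := by
    rw [← Real.rpow_add hx₀]
    congr 1
    ring
  have hrp : 0 < x₀ ^ (-((m : ℝ) + ((ℓ : ℝ) + 1) / 2)) := Real.rpow_pos_of_pos hx₀ _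
  calc ‖∫ k : ℝ, (2 * (π : ℂ) * Complex.I * (k : ℂ)) ^ ℓ
          * (((ε ^ 2)⁻¹ * Q.eval (2 * π * ε * k) : ℝ) : ℂ) ^ m
          * Complex.exp ((-((ε ^ 2)⁻¹ * Q.eval (2 * π * ε * k) * x₀) : ℝ) : ℂ)
          * Complex.exp (2 * (π : ℂ) * Complex.I * (k : ℂ) * (x₁ : ℂ))‖
      ≤ ∫ k : ℝ, ‖(2 * (π : ℂ) * Complex.I * (k : ℂ)) ^ ℓ
          * (((ε ^ 2)⁻¹ * Q.eval (2 * π * ε * k) : ℝ) : ℂ) ^ m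
          * Complex.exp ((-((ε ^ 2)⁻¹ * Q.eval (2 * π * ε * k) * x₀) : ℝ) : ℂ)
          * Complex.exp (2 * (π : ℂ) * Complex.I * (k : ℂ) * (x₁ : ℂ))‖ :=
        norm_integral_le_integral_norm _
    _ ≤ ∫ k : ℝ, D * (|k| ^ ℓ * Real.exp (-a * k ^ 2)) := by
        refine integral_mono_of_nonneg (Filter.Eventually.of_forall fun k => norm_nonneg _)
          hInt (Filter.Eventually.of_forall fun k => ?_)
        dsimp only
        rw [hnorm k]
        exact hb k
    _ = D * ∫ k : ℝ, |k| ^ ℓ * Real.exp (-a * k ^ 2) := MeasureTheory.integral_const_mul _ _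
    _ = D * (((Real.sqrt a)⁻¹) ^ (ℓ + 1) * I) := by
        rw [integral_abs_pow_mul_exp_scale ℓ ha, hI]
    _ = K * (x₀ ^ (-(m:ℝ)) * x₀ ^ (-(((ℓ:ℝ) + 1) / 2))) := by
        rw [hsqa, hD, hK]; ring
    _ = K * x₀ ^ (-((m : ℝ) + ((ℓ : ℝ) + 1) / 2)) := by rw [hx2]
    _ ≤ (K + 1) * x₀ ^ (-((m : ℝ) + ((ℓ : ℝ) + 1) / 2)) := by nlinarith
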